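/- For every integer n ≥ 0, every real N > 0 and every real X: H_n(X) = (N^{n/2}/(N)_{n/2}) · ∫_0^∞ H_n^N(X√N/√c) · γ_{N+(n+1)/2}(c) dc, where (N)_{n/2} := Γ(N+n/2)/Γ(N). -/

import Mathlib

open Finset Polynomial MeasureTheory

/-- The (physicists') Hermite polynomial `H_n(X)`. -/
noncomputable def Hpoly (n : ℕ) (X : ℝ) : ℝ :=
  (n.factorial : ℝ) *
    ∑ k ∈ Finset.range (n / 2 + 1),
      (-1) ^ k / ((k.factorial : ℝ) * ((n - 2 * k).factorial : ℝ)) * (2 * X) ^ (n - 2 * k)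

/-- The relativistic Hermite polynomial `H_n^N(X)` (real parameter `N > 0`). -/
noncomputable def RH (n : ℕ) (N X : ℝ) : ℝ :=
  ((ascPochhammer ℝ n).eval (2 * N) / (2 * Real.sqrt N) ^ n) *
    ∑ k ∈ Finset.range (n / 2 + 1),
      (-1) ^ k / (ascPochhammer ℝ k).eval (N + 1 / 2) *
        ((n.factorial : ℝ) / (((n - 2 * k).factorial : ℝ) * (k.factorial : ℝ))) *
        (2 * X / Real.sqrt N) ^ (n - 2 * k)

/-- The Gamma density with shape parameter `a`, `γ_a(b) = e^(-b) b^(a-1) / Γ(a)` on `(0,∞)`. -/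
noncomputable def gammaPdf (a b : ℝ) : ℝ :=
  Real.exp (-b) * b ^ (a - 1) / Real.Gamma a

lemma asc_pos (k : ℕ) {x : ℝ} (hx : 0 < x) : 0 < (ascPochhammer ℝ k).eval x := by
  induction k with
  | zero => simp
  | succ k ih =>
    rw [ascPochhammer_succ_eval]
    exact mul_pos ih (by positivity)

lemma Gamma_add_nat {x : ℝ} (hx : 0 < x) (k : ℕ) :
    Real.Gamma (x + k) = (ascPochhammer ℝ k).eval x * Real.Gamma x := by
  induction k with
  | zero => simp
  | succ k ih =>
    have : x + (k + 1 : ℕ) = (x + k) + 1 := by push_cast; ring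
    rw [this, Real.Gamma_add_one (by positivity), ih, ascPochhammer_succ_eval]
    ring


/-- Subordination: `H_n(X) = (N^(n/2)/(N)_(n/2)) ∫_0^∞ H_n^N(X√N/√c) γ_(N+(n+1)/2)(c) dc`,
where `(N)_(n/2) = Γ(N+n/2)/Γ(N)`. -/
theorem hermite_subordination_RH (n : ℕ) (N : ℝ) (hN : 0 < N) (X : ℝ) :
    Hpoly n X =
      N ^ ((n : ℝ) / 2) / (Real.Gamma (N + (n : ℝ) / 2) / Real.Gamma N) *
        ∫ c in Set.Ioi (0 : ℝ),
          RH n N (X * Real.sqrt N / Real.sqrt c) * gammaPdf (N + ((n : ℝ) + 1) / 2) c := by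
  set a : ℝ := N + ((n : ℝ) + 1) / 2 with ha_def
  have ha : 0 < a := by positivity
  have hsN : (0:ℝ) < Real.sqrt N := Real.sqrt_pos.mpr hN
  set pref : ℝ := (ascPochhammer ℝ n).eval (2 * N) / (2 * Real.sqrt N) ^ n with hpref
  set C : ℕ → ℝ := fun k =>
    pref * ((-1) ^ k / (ascPochhammer ℝ k).eval (N + 1 / 2) *
      ((n.factorial : ℝ) / (((n - 2 * k).factorial : ℝ) * (k.factorial : ℝ)))) *
      (2 * X) ^ (n - 2 * k) / Real.Gamma a with hC
  have h2k : ∀ k ∈ Finset.range (n / 2 + 1), 2 * k ≤ n := by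
    intro k hk
    rw [Finset.mem_range, Nat.lt_succ_iff] at hk
    calc 2 * k = k * 2 := by ring
    _ ≤ n := (Nat.le_div_iff_mul_le (by norm_num)).mp hk
  -- rewrite the integrand on Ioi 0
  have hInt : ∀ c ∈ Set.Ioi (0:ℝ),
      RH n N (X * Real.sqrt N / Real.sqrt c) * gammaPdf a c =
      ∑ k ∈ Finset.range (n / 2 + 1),
        C k * (Real.exp (-c) * c ^ ((N + 1/2 + k) - 1)) := by
    intro c hc
    rw [Set.mem_Ioi] at hc
    have hsc : (0:ℝ) < Real.sqrt c := Real.sqrt_pos.mpr hc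
    have harg : 2 * (X * Real.sqrt N / Real.sqrt c) / Real.sqrt N = 2 * X / Real.sqrt c := by
      field_simp
    rw [RH, harg, gammaPdf, mul_assoc, Finset.sum_mul, Finset.mul_sum]
    refine Finset.sum_congr rfl fun k hk => ?_
    have hm : ((n - 2*k : ℕ) : ℝ) = (n : ℝ) - 2 * k := by
      have := h2k k hk
      push_cast [Nat.cast_sub this]; ring
    have hsqpow : Real.sqrt c ^ (n - 2*k) = c ^ (((n - 2*k : ℕ) : ℝ) / 2) := by
      rw [← Real.rpow_natCast (Real.sqrt c) (n - 2*k), Real.sqrt_eq_rpow,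
        ← Real.rpow_mul hc.le]
      ring_nf
    have hdivpow : (2 * X / Real.sqrt c) ^ (n - 2*k) =
        (2 * X) ^ (n - 2*k) * (c ^ (((n - 2*k : ℕ) : ℝ) / 2))⁻¹ := by
      rw [div_pow, hsqpow, div_eq_mul_inv]
    rw [hdivpow]
    have hrpow : c ^ (a - 1) * (c ^ (((n - 2*k : ℕ) : ℝ) / 2))⁻¹ =
        c ^ ((N + 1/2 + k) - 1) := by
      rw [← Real.rpow_neg hc.le, ← Real.rpow_add hc]
      congr 1
      rw [hm, ha_def]; ring
    have hGa : Real.Gamma a ≠ 0 := (Real.Gamma_pos_of_pos ha).ne'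
    simp only [hC]
    rw [← hrpow]
    ring
  rw [setIntegral_congr_fun measurableSet_Ioi hInt]
  rw [MeasureTheory.integral_finset_sum _ (fun k _ => by
    exact (Real.GammaIntegral_convergent (by positivity : (0:ℝ) < N + 1/2 + k)).const_mul (C k))]
  have hint : ∀ k ∈ Finset.range (n/2+1),
      ∫ c in Set.Ioi (0:ℝ), C k * (Real.exp (-c) * c ^ ((N + 1/2 + k) - 1)) =
      C k * ((ascPochhammer ℝ k).eval (N + 1/2) * Real.Gamma (N + 1/2)) := by
    intro k _
    rw [MeasureTheory.integral_const_mul, ← Real.Gamma_eq_integral (by positivity),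
      ← Gamma_add_nat (by positivity : (0:ℝ) < N + 1/2) k]
  rw [Finset.sum_congr rfl hint]
  -- simplify each summand: cancel the Pochhammer
  have hsum : ∀ k ∈ Finset.range (n/2+1),
      C k * ((ascPochhammer ℝ k).eval (N + 1/2) * Real.Gamma (N + 1/2)) =
      (pref * Real.Gamma (N + 1/2) / Real.Gamma a * (n.factorial : ℝ)) *
        ((-1) ^ k / ((k.factorial : ℝ) * ((n - 2 * k).factorial : ℝ)) * (2 * X) ^ (n - 2 * k)) := by
    intro k _
    have hasc : (ascPochhammer ℝ k).eval (N + 1/2) ≠ 0 := (asc_pos k (by positivity)).ne'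
    have hf1 : ((n - 2*k).factorial : ℝ) ≠ 0 := Nat.cast_ne_zero.mpr (Nat.factorial_ne_zero _)
    have hf2 : ((k).factorial : ℝ) ≠ 0 := Nat.cast_ne_zero.mpr (Nat.factorial_ne_zero _)
    have hGa : Real.Gamma a ≠ 0 := (Real.Gamma_pos_of_pos ha).ne'
    simp only [hC]
    set E := (ascPochhammer ℝ k).eval (N + 1/2) with hE
    field_simp
  rw [Finset.sum_congr rfl hsum, ← Finset.mul_sum]
  -- now the scalar identity
  have hdup1 := Real.Gamma_mul_Gamma_add_half N
  have hdup2 := Real.Gamma_mul_Gamma_add_half (N + (n:ℝ)/2)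
  have hasc : (ascPochhammer ℝ n).eval (2*N) = Real.Gamma (2*N + n) / Real.Gamma (2*N) := by
    rw [Gamma_add_nat (by positivity) n]
    field_simp [(Real.Gamma_pos_of_pos (by positivity : (0:ℝ) < 2*N)).ne']
  have hNpow : (2 * Real.sqrt N) ^ n = 2 ^ n * N ^ ((n:ℝ)/2) := by
    rw [mul_pow, ← Real.rpow_natCast (Real.sqrt N) n, Real.sqrt_eq_rpow,
      ← Real.rpow_mul hN.le]
    ring_nf
  have h2a : 2 * (N + (n:ℝ)/2) = 2*N + n := by ring
  have haa : N + (n:ℝ)/2 + 1/2 = a := by rw [ha_def]; ring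
  rw [h2a, haa] at hdup2
  have hS : N ^ ((n:ℝ)/2) / (Real.Gamma (N + (n:ℝ)/2) / Real.Gamma N) *
      (pref * Real.Gamma (N + 1/2) / Real.Gamma a * (n.factorial : ℝ)) = (n.factorial : ℝ) := by
    have hpow2 : (2:ℝ) ^ (1 - 2*N) = 2 ^ n * (2:ℝ) ^ (1 - (2*N + (n:ℝ))) := by
      rw [← Real.rpow_natCast (2:ℝ) n, ← Real.rpow_add (by norm_num : (0:ℝ) < 2)]
      congr 1; ring
    have key : Real.Gamma (2*N + (n:ℕ)) * (Real.Gamma N * Real.Gamma (N + 1/2)) =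
        (2:ℝ) ^ n * Real.Gamma (2*N) * (Real.Gamma (N + (n:ℝ)/2) * Real.Gamma a) := by
      rw [hdup1, hdup2, hpow2]; ring
    rw [hpref, hasc, hNpow]
    set G1 := Real.Gamma N with hG1d
    set Gh := Real.Gamma (N + 1/2) with hGhd
    set G2 := Real.Gamma (N + (n:ℝ)/2) with hG2d
    set G3 := Real.Gamma a with hG3d
    set G4 := Real.Gamma (2*N) with hG4d
    set G5 := Real.Gamma (2*N + (n:ℕ)) with hG5d
    set P := N ^ ((n:ℝ)/2) with hPd
    have hG1 : G1 ≠ 0 := (Real.Gamma_pos_of_pos hN).ne'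
    have hG2 : G2 ≠ 0 := (Real.Gamma_pos_of_pos (by positivity)).ne'
    have hG3 : G3 ≠ 0 := (Real.Gamma_pos_of_pos ha).ne'
    have hG4 : G4 ≠ 0 := (Real.Gamma_pos_of_pos (by positivity)).ne'
    have hG5 : G5 ≠ 0 := (Real.Gamma_pos_of_pos (by positivity)).ne'
    have hGh : Gh ≠ 0 := (Real.Gamma_pos_of_pos (by positivity)).ne'
    have hNp : P ≠ 0 := (Real.rpow_pos_of_pos hN _).ne'
    have h2p : ((2:ℝ) ^ n : ℝ) ≠ 0 := by positivity
    field_simp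
    linear_combination key
  rw [← mul_assoc, hS, Hpoly]
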